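/- Let A be a primitive PC(-1)-axial algebra (over F with char F ≠ 2, 3) with Frobenius form (·,·) normalized by (a,a) = 1 on primitive axes. Then for every primitive axis a and all x, y ∈ A: (ax)(ay) = (1/4)·( (6(a,xy) - 3(x,y))·a + (a,y)·x + (a,x)·y - 2(a,y)·ax - 2(a,x)·ay - xy + 2·x(ay) + 2·y(ax) ). Moreover, if instead η ≠ -1 (η ∉ {1, 1/2}, char F ≠ 2) and w is the weight homomorphism of A, then (ax)(ay) = (1/4)·( (1-2η)·w(xy)·a - η·w(y)·x - η·w(x)·y + 2η·w(y)·ax + 2η·w(x)·ay - xy + 2·x(ay) + 2·y(ax) ). -/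
import Mathlib


open Submodule

variable {F : Type*} [Field F] {A : Type*} [NonUnitalNonAssocCommRing A]
  [Module F A] [SMulCommClass F A A] [IsScalarTower F A A]

variable (F) in
/-- The `lam`-eigenspace of the adjoint map of `a`. -/
def PCeig (a : A) (lam : F) : Submodule F A where
  carrier := {x : A | a * x = lam • x}
  add_mem' := by
    intro x y hx hy
    simp only [Set.mem_setOf_eq] at hx hy ⊢
    rw [mul_add, hx, hy, smul_add]
  zero_mem' := by simp
  smul_mem' := by
    intro c x hx
    simp only [Set.mem_setOf_eq] at hx ⊢
    rw [mul_smul_comm, hx, smul_smul, smul_smul, mul_comm]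

variable (F) in
/-- The fusion law `PC(η)` for an idempotent (axis) `a`. -/
structure IsPCAxis (η : F) (a : A) : Prop where
  idem : a * a = a
  decomp : PCeig F a 1 ⊔ PCeig F a η ⊔ PCeig F a (1/2 : F) = ⊤
  fus11 : ∀ x ∈ PCeig F a 1, ∀ y ∈ PCeig F a 1, x * y ∈ PCeig F a 1
  fus1e : ∀ x ∈ PCeig F a 1, ∀ y ∈ PCeig F a η, x * y ∈ PCeig F a η
  fus1h : ∀ x ∈ PCeig F a 1, ∀ y ∈ PCeig F a (1/2 : F), x * y ∈ PCeig F a (1/2 : F)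
  fusee : ∀ x ∈ PCeig F a η, ∀ y ∈ PCeig F a η, x * y ∈ PCeig F a 1
  fuseh : ∀ x ∈ PCeig F a η, ∀ y ∈ PCeig F a (1/2 : F), x * y ∈ PCeig F a (1/2 : F)
  fushh : ∀ x ∈ PCeig F a (1/2 : F), ∀ y ∈ PCeig F a (1/2 : F),
    x * y ∈ PCeig F a 1 ⊔ PCeig F a η

variable (F) in
/-- A primitive axis: an axis with `A_1(a) = F·a` (one-dimensional). -/
def IsPrimPCAxis (η : F) (a : A) : Prop :=
  IsPCAxis F η a ∧ a ≠ 0 ∧ PCeig F a 1 = Submodule.span F {a}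

variable (F A) in
/-- A `PC(η)`-axial algebra: generated, as a non-unital algebra, by a (nonempty) set of axes. -/
def IsPCAxialAlgebra (η : F) : Prop :=
  ∃ X : Set A, X.Nonempty ∧ (∀ a ∈ X, IsPCAxis F η a) ∧
    NonUnitalAlgebra.adjoin F X = ⊤

variable (F A) in
/-- A primitive `PC(η)`-axial algebra: generated by a (nonempty) set of primitive axes. -/
def IsPrimPCAxialAlgebra (η : F) : Prop :=
  ∃ X : Set A, X.Nonempty ∧ (∀ a ∈ X, IsPrimPCAxis F η a) ∧
    NonUnitalAlgebra.adjoin F X = ⊤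


set_option linter.unusedSectionVars false

namespace Stmt18Aux

variable {F : Type*} [Field F] {A : Type*} [NonUnitalNonAssocCommRing A]
  [Module F A] [SMulCommClass F A A] [IsScalarTower F A A]

theorem mem_PCeig {a x : A} {lam : F} : x ∈ PCeig F a lam ↔ a * x = lam • x := Iff.rfl

theorem two_eta_ne {η : F} (h2 : (2 : F) ≠ 0) (hηh : η ≠ 1 / 2) : 2 * η - 1 ≠ 0 := by
  intro h
  apply hηh
  field_simp
  linear_combination h

theorem one_ne_half {F : Type*} [Field F] (h2 : (2 : F) ≠ 0) : (1 : F) ≠ 1 / 2 := by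
  intro h
  have h1 : (1 : F) * 2 = 1 / 2 * 2 := by rw [← h]
  rw [one_mul, div_mul_cancel₀ _ h2] at h1
  exact one_ne_zero (α := F) (by linear_combination h1)

theorem four_ne {F : Type*} [Field F] (h2 : (2 : F) ≠ 0) : (4 : F) ≠ 0 := by
  have : (4 : F) = 2 * 2 := by norm_num
  rw [this]
  exact mul_ne_zero h2 h2

theorem eight_ne {F : Type*} [Field F] (h2 : (2 : F) ≠ 0) : (8 : F) ≠ 0 := by
  have : (8 : F) = 2 * (2 * 2) := by norm_num
  rw [this]
  exact mul_ne_zero h2 (mul_ne_zero h2 h2)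

theorem sixteen_ne {F : Type*} [Field F] (h2 : (2 : F) ≠ 0) : (16 : F) ≠ 0 := by
  have : (16 : F) = 2 * (2 * (2 * 2)) := by norm_num
  rw [this]
  exact mul_ne_zero h2 (mul_ne_zero h2 (mul_ne_zero h2 h2))

/-- An element of the 1-eigenspace is fixed by multiplication. -/
theorem eig_one {a z : A} (hz : z ∈ PCeig F a 1) : a * z = z := by
  rw [mem_PCeig.mp hz, one_smul]

/-- Uniqueness of the eigenspace decomposition. -/
theorem direct3 {η : F} (h2 : (2 : F) ≠ 0) (hη1 : η ≠ 1) (hηh : η ≠ 1 / 2)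
    {a z1 u p : A} (h1 : z1 ∈ PCeig F a 1) (hu : u ∈ PCeig F a η)
    (hp : p ∈ PCeig F a (1 / 2 : F)) (hsum : z1 + u + p = 0) :
    z1 = 0 ∧ u = 0 ∧ p = 0 := by
  have e1 : a * z1 = z1 := eig_one h1
  have eu : a * u = η • u := hu
  have ep : a * p = (1 / 2 : F) • p := hp
  have eqA : z1 + η • u + (1 / 2 : F) • p = 0 := by
    have h := congrArg (fun t => a * t) hsum
    simpa [mul_add, e1, eu, ep] using h
  have eqB : z1 + (η * η) • u + ((1 / 2 : F) * (1 / 2)) • p = 0 := by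
    have h := congrArg (fun t => a * t) eqA
    simpa [mul_add, e1, eu, ep, mul_smul_comm, smul_smul] using h
  have h4 : (4 : F) ≠ 0 := four_ne h2
  have key : ((2 * η - 1) / 4 : F) • p = 0 := by
    have hcomb : ((2 * η - 1) / 4 : F) • p =
        η • (z1 + u + p) - (1 + η) • (z1 + η • u + (1 / 2 : F) • p) +
          (z1 + (η * η) • u + ((1 / 2 : F) * (1 / 2)) • p) := by
      match_scalars <;> field_simp [h4] <;> ring_nf
    rw [hsum, eqA, eqB] at hcomb
    simpa using hcomb
  have hp0 : p = 0 := by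
    rcases smul_eq_zero.mp key with h | h
    · exact absurd h (div_ne_zero (two_eta_ne h2 hηh) (four_ne h2))
    · exact h
  have keyu : (η - 1) • u = 0 := by
    have hcomb : (η - 1) • u = (z1 + η • u + (1 / 2 : F) • p) - (z1 + u + p) +
        (1 / 2 : F) • p := by
      match_scalars <;> field_simp [h4] <;> ring_nf
    rw [hsum, eqA, hp0] at hcomb
    simpa using hcomb
  have hu0 : u = 0 := by
    rcases smul_eq_zero.mp keyu with h | h
    · exact absurd (by linear_combination h : η = 1) hη1
    · exact h
  have hz0 : z1 = 0 := by
    have := hsum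
    rw [hp0, hu0] at this
    simpa using this
  exact ⟨hz0, hu0, hp0⟩

/-- Decomposition of an arbitrary element with respect to a primitive axis. -/
theorem decompose {η : F} {a : A} (ha : IsPrimPCAxis F η a) (x : A) :
    ∃ (α : F) (u p : A), u ∈ PCeig F a η ∧ p ∈ PCeig F a (1 / 2 : F) ∧
      x = α • a + u + p := by
  have hx : x ∈ PCeig F a 1 ⊔ PCeig F a η ⊔ PCeig F a (1 / 2 : F) := by
    rw [ha.1.decomp]; trivial
  obtain ⟨z, hz, p, hp, hzp⟩ := Submodule.mem_sup.mp hx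
  obtain ⟨z1, hz1, u, hu, hz1u⟩ := Submodule.mem_sup.mp hz
  rw [ha.2.2] at hz1
  obtain ⟨α, hα⟩ := Submodule.mem_span_singleton.mp hz1
  exact ⟨α, u, p, hu, hp, by rw [← hzp, ← hz1u, hα]⟩

section FormLemmas

variable {η : F} (B : A →ₗ[F] A →ₗ[F] F)
  (hBfrob : ∀ x y z : A, B (x * y) z = B x (y * z))

theorem a_mem_one {a : A} (ha : IsPCAxis F η a) : a ∈ PCeig F a 1 := by
  rw [mem_PCeig, ha.idem, one_smul]

include hBfrob

/-- Eigenvectors for different eigenvalues are orthogonal. -/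
theorem B_apart {a x y : A} {lam mu : F} (hx : x ∈ PCeig F a lam)
    (hy : y ∈ PCeig F a mu) (hne : lam ≠ mu) : B x y = 0 := by
  have h1 : B (a * x) y = lam * B x y := by
    rw [mem_PCeig.mp hx, map_smul, LinearMap.smul_apply, smul_eq_mul]
  have h2 : B (a * x) y = mu * B x y := by
    rw [mul_comm, hBfrob, mem_PCeig.mp hy, map_smul, smul_eq_mul]
  have h3 : (lam - mu) * B x y = 0 := by linear_combination h1.symm.trans h2
  rcases mul_eq_zero.mp h3 with h | h
  · exact absurd (by linear_combination h) hne
  · exact h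

/-- `B a u = 0` for `u` in the η-eigenspace. -/
theorem B_a_eta (h1 : η ≠ 1) {a u : A} (ha : IsPCAxis F η a)
    (hu : u ∈ PCeig F a η) : B a u = 0 :=
  B_apart B hBfrob (a_mem_one ha) hu (Ne.symm h1)

/-- `B a p = 0` for `p` in the ½-eigenspace. -/
theorem B_a_half (h2 : (2 : F) ≠ 0) {a p : A} (ha : IsPCAxis F η a)
    (hp : p ∈ PCeig F a (1 / 2 : F)) : B a p = 0 :=
  B_apart B hBfrob (a_mem_one ha) hp (one_ne_half h2)

/-- Product of two η-eigenvectors. -/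
theorem prod_ee (hB1 : ∀ a : A, IsPrimPCAxis F η a → B a a = 1)
    {a u v : A} (ha : IsPrimPCAxis F η a) (hu : u ∈ PCeig F a η)
    (hv : v ∈ PCeig F a η) (h1 : η ≠ 1) :
    u * v = (η * B u v) • a := by
  have hm : u * v ∈ PCeig F a 1 := ha.1.fusee u hu v hv
  rw [ha.2.2] at hm
  obtain ⟨μ, hμ⟩ := Submodule.mem_span_singleton.mp hm
  have h1' : B a (u * v) = μ := by
    rw [← hμ, map_smul, smul_eq_mul, hB1 a ha, mul_one]
  have h2' : B a (u * v) = η * B u v := by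
    rw [← hBfrob, mem_PCeig.mp hu, map_smul, LinearMap.smul_apply, smul_eq_mul]
  rw [← hμ, ← h1', h2']

/-- Product of two ½-eigenvectors. -/
theorem prod_hh (hB1 : ∀ a : A, IsPrimPCAxis F η a → B a a = 1) (h1 : η ≠ 1)
    {a p q : A} (ha : IsPrimPCAxis F η a) (hp : p ∈ PCeig F a (1 / 2 : F))
    (hq : q ∈ PCeig F a (1 / 2 : F)) :
    ∃ r ∈ PCeig F a η, p * q = ((1 / 2 : F) * B p q) • a + r := by
  have hm : p * q ∈ PCeig F a 1 ⊔ PCeig F a η := ha.1.fushh p hp q hq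
  obtain ⟨z1, hz1, r, hr, hzr⟩ := Submodule.mem_sup.mp hm
  rw [ha.2.2] at hz1
  obtain ⟨μ, hμ⟩ := Submodule.mem_span_singleton.mp hz1
  refine ⟨r, hr, ?_⟩
  have hBar : B a r = 0 := B_a_eta B hBfrob h1 ha.1 hr
  have h1' : B a (p * q) = μ := by
    rw [← hzr, map_add, ← hμ, map_smul, smul_eq_mul, hB1 a ha, mul_one, hBar, add_zero]
  have h2' : B a (p * q) = (1 / 2 : F) * B p q := by
    rw [← hBfrob, mem_PCeig.mp hp, map_smul, LinearMap.smul_apply, smul_eq_mul]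
  rw [← hzr, ← hμ, ← h1', h2']

/-- Any two primitive axes pair to 1 under the normalized Frobenius form (η ≠ -1). -/
theorem pairwise (h2 : (2 : F) ≠ 0) (hη1 : η ≠ 1) (hηh : η ≠ 1 / 2) (hηm1 : η + 1 ≠ 0)
    (hB1 : ∀ a : A, IsPrimPCAxis F η a → B a a = 1)
    {b c : A} (hb : IsPrimPCAxis F η b) (hc : IsPrimPCAxis F η c) :
    B b c = 1 := by
  obtain ⟨γ, u, p, hu, hp, hceq⟩ := decompose hb c
  have hbb : b * b = b := hb.1.idem
  have hbu : b * u = η • u := hu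
  have hbp : b * p = (1 / 2 : F) • p := hp
  have huu : u * u = (η * B u u) • b := prod_ee B hBfrob hB1 hb hu hu hη1
  obtain ⟨r, hr, hpp⟩ := prod_hh B hBfrob hB1 hη1 hb hp hp
  have hpu : p * u = u * p := mul_comm p u
  have hup_mem : u * p ∈ PCeig F b (1 / 2 : F) := hb.1.fuseh u hu p hp
  -- orthogonality facts
  have hBbb : B b b = 1 := hB1 b hb
  have hBbu : B b u = 0 := B_a_eta B hBfrob hη1 hb.1 hu
  have hBub : B u b = 0 := B_apart B hBfrob hu (a_mem_one hb.1) hη1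
  have hBbp : B b p = 0 := B_a_half B hBfrob h2 hb.1 hp
  have hBpb : B p b = 0 :=
    B_apart B hBfrob hp (a_mem_one hb.1) (Ne.symm (one_ne_half h2))
  have hBup : B u p = 0 := B_apart B hBfrob hu hp hηh
  have hBpu : B p u = 0 := B_apart B hBfrob hp hu (Ne.symm hηh)
  -- expansion of c * c
  have hexp : c * c = (γ * γ + η * B u u + (1 / 2 : F) * B p p) • b +
      ((2 * (γ * η)) • u + r) + (γ • p + (2 : F) • (u * p)) := by
    conv_lhs => rw [hceq]
    have hub : u * b = η • u := by rw [mul_comm]; exact hbu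
    have hpb : p * b = (1 / 2 : F) • p := by rw [mul_comm]; exact hbp
    simp only [mul_add, add_mul, smul_mul_assoc, mul_smul_comm, smul_smul,
      hbb, hbu, hbp, hub, hpb, huu, hpu, hpp]
    match_scalars <;> (field_simp; try ring_nf)
  have h0 : (γ * γ + η * B u u + (1 / 2 : F) * B p p - γ) • b +
      ((2 * (γ * η) - 1) • u + r) + ((γ - 1) • p + (2 : F) • (u * p)) = 0 := by
    have hd : (γ * γ + η * B u u + (1 / 2 : F) * B p p - γ) • b +
        ((2 * (γ * η) - 1) • u + r) + ((γ - 1) • p + (2 : F) • (u * p)) =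
        c * c - c := by
      rw [hexp]
      conv_rhs => rw [hceq]
      module
    rw [hd, hc.1.idem, sub_self]
  obtain ⟨e1', e2', e3'⟩ := direct3 h2 hη1 hηh
    (Submodule.smul_mem _ _ (a_mem_one hb.1))
    (Submodule.add_mem _ (Submodule.smul_mem _ _ hu) hr)
    (Submodule.add_mem _ (Submodule.smul_mem _ _ hp) (Submodule.smul_mem _ _ hup_mem)) h0
  -- component equations
  have he1 : γ * γ + η * B u u + (1 / 2 : F) * B p p - γ = 0 := by
    rcases smul_eq_zero.mp e1' with h | h
    · exact h
    · exact absurd h hb.2.1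
  have hre : r = (1 - 2 * (γ * η)) • u := by
    have h := eq_neg_of_add_eq_zero_right e2'
    rw [h, ← neg_smul]
    congr 1
    ring
  have hup : u * p = ((1 / 2 : F) * (1 - γ)) • p := by
    have h : (2 : F) • (u * p) = (1 - γ) • p := by
      have h' := eq_neg_of_add_eq_zero_right e3'
      rw [h', ← neg_smul]
      congr 1
      ring
    have h'' := congrArg (fun t => (1 / 2 : F) • t) h
    simpa [smul_smul, one_div, inv_mul_cancel₀ h2] using h''
  -- the norm equation
  have hEN : γ * γ + B u u + B p p = 1 := by
    have hBcc := hB1 c hc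
    rw [hceq] at hBcc
    simp only [map_add, map_smul, LinearMap.add_apply, LinearMap.smul_apply,
      smul_eq_mul, hBbb, hBbu, hBub, hBbp, hBpb, hBup, hBpu] at hBcc
    linear_combination hBcc
  -- the Frobenius equation
  have hEF : (1 / 2 : F) * (1 - γ) * B p p = (1 - 2 * (γ * η)) * B u u := by
    have h := hBfrob u p p
    rw [hup, hpp, hre] at h
    simp only [map_add, map_smul, LinearMap.smul_apply, smul_eq_mul, hBub] at h
    linear_combination h
  -- the certificate
  have hkey : (η + 1) * ((γ - 1) ^ 3) = 0 := by
    linear_combination (norm := (field_simp [h2]; ring1)) (-3 + γ + 4 * γ * η) * he1 +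
      (1 + η - 3 * γ * η) * hEN + (1 - 2 * η) * hEF
  have hγ : γ = 1 := by
    rcases mul_eq_zero.mp hkey with h | h
    · exact absurd h hηm1
    · have := (pow_eq_zero_iff (by norm_num : (3 : ℕ) ≠ 0)).mp h
      linear_combination this
  have hBbc : B b c = γ := by
    rw [hceq]
    simp [hBbb, hBbu, hBbp]
  rw [hBbc, hγ]

end FormLemmas

section Miyamoto

variable {η : F}

/-- The Miyamoto involution associated to an axis `b`, written as a polynomial in `ad b`. -/
def phi (η : F) (b x : A) : A :=
  x - (8 * (2 * η - 1)⁻¹) • (b * (b * x)) + (8 * (2 * η - 1)⁻¹ * (1 + η)) • (b * x)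
    - (8 * (2 * η - 1)⁻¹ * η) • x

theorem phi_add (b x y : A) : phi η b (x + y) = phi η b x + phi η b y := by
  simp only [phi, mul_add]
  module

theorem phi_smul (b : A) (t : F) (x : A) : phi η b (t • x) = t • phi η b x := by
  simp only [phi, mul_smul_comm]
  module

theorem phi_zero (b : A) : phi η b (0 : A) = 0 := by
  simp [phi]

theorem phi_neg (b x : A) : phi η b (-x) = -phi η b x := by
  have h := phi_smul (η := η) b (-1 : F) x
  simpa [neg_one_smul] using h

theorem phi_sub (b x y : A) : phi η b (x - y) = phi η b x - phi η b y := by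
  rw [sub_eq_add_neg, phi_add, phi_neg, sub_eq_add_neg]

theorem phi_eig_one {b z : A} (hz : z ∈ PCeig F b 1) : phi η b z = z := by
  have h1 : b * z = z := eig_one hz
  simp only [phi, h1]
  module

theorem phi_eig_eta {b z : A} (hz : z ∈ PCeig F b η) : phi η b z = z := by
  have h1 : b * z = η • z := hz
  simp only [phi, h1, mul_smul_comm, smul_smul]
  module

theorem phi_eig_half (h2 : (2 : F) ≠ 0) (hηh : η ≠ 1 / 2) {b z : A}
    (hz : z ∈ PCeig F b (1 / 2 : F)) : phi η b z = -z := by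
  have h1 : b * z = (1 / 2 : F) • z := hz
  have hK : (2 * η - 1) * (2 * η - 1)⁻¹ = 1 := mul_inv_cancel₀ (two_eta_ne h2 hηh)
  have hd : (2 : F) * (1 / 2) = 1 := by rw [mul_one_div]; exact div_self h2
  have hcoef : 1 - 8 * (2 * η - 1)⁻¹ * (1 / 2 * (1 / 2)) + 8 * (2 * η - 1)⁻¹ * (1 + η) * (1 / 2)
      - 8 * (2 * η - 1)⁻¹ * η = -1 := by
    linear_combination (-4 * (2 * η - 1)⁻¹ * (1 / 2) + 2 * (2 * η - 1)⁻¹ +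
      4 * (2 * η - 1)⁻¹ * η) * hd + (-2 : F) * hK
  simp only [phi, h1, mul_smul_comm, smul_smul]
  match_scalars
  linear_combination hcoef

theorem phi_plus {b z : A} (hz : z ∈ PCeig F b 1 ⊔ PCeig F b η) : phi η b z = z := by
  obtain ⟨z1, h1, ze, he, hsum⟩ := Submodule.mem_sup.mp hz
  rw [← hsum, phi_add, phi_eig_one h1, phi_eig_eta he]

/-- Decomposition (non-primitive version). -/
theorem decompose' {a : A} (ha : IsPCAxis F η a) (x : A) :
    ∃ s ∈ PCeig F a 1 ⊔ PCeig F a η, ∃ p ∈ PCeig F a (1 / 2 : F), x = s + p := by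
  have hx : x ∈ PCeig F a 1 ⊔ PCeig F a η ⊔ PCeig F a (1 / 2 : F) := by
    rw [ha.decomp]; trivial
  obtain ⟨s, hs, p, hp, hsp⟩ := Submodule.mem_sup.mp hx
  exact ⟨s, hs, p, hp, hsp.symm⟩

theorem phi_invol (h2 : (2 : F) ≠ 0) (hηh : η ≠ 1 / 2) {b : A} (hb : IsPCAxis F η b)
    (x : A) : phi η b (phi η b x) = x := by
  obtain ⟨s, hs, p, hp, rfl⟩ := decompose' hb x
  rw [phi_add, phi_plus hs, phi_eig_half h2 hηh hp, phi_add, phi_plus hs, phi_neg,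
    phi_eig_half h2 hηh hp, neg_neg]

theorem plus_mul_plus {b : A} (hb : IsPCAxis F η b) {z w : A}
    (hz : z ∈ PCeig F b 1 ⊔ PCeig F b η) (hw : w ∈ PCeig F b 1 ⊔ PCeig F b η) :
    z * w ∈ PCeig F b 1 ⊔ PCeig F b η := by
  obtain ⟨z1, h1, ze, he, rfl⟩ := Submodule.mem_sup.mp hz
  obtain ⟨w1, hw1, we, hwe, rfl⟩ := Submodule.mem_sup.mp hw
  have hexp : (z1 + ze) * (w1 + we) = z1 * w1 + z1 * we + (w1 * ze + ze * we) := by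
    rw [mul_add, add_mul, add_mul, mul_comm ze w1]
    abel
  rw [hexp]
  refine Submodule.add_mem _ (Submodule.add_mem _ ?_ ?_) (Submodule.add_mem _ ?_ ?_)
  · exact Submodule.mem_sup_left (hb.fus11 z1 h1 w1 hw1)
  · exact Submodule.mem_sup_right (hb.fus1e z1 h1 we hwe)
  · exact Submodule.mem_sup_right (hb.fus1e w1 hw1 ze he)
  · exact Submodule.mem_sup_left (hb.fusee ze he we hwe)

theorem plus_mul_half {b : A} (hb : IsPCAxis F η b) {z p : A}
    (hz : z ∈ PCeig F b 1 ⊔ PCeig F b η) (hp : p ∈ PCeig F b (1 / 2 : F)) :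
    z * p ∈ PCeig F b (1 / 2 : F) := by
  obtain ⟨z1, h1, ze, he, rfl⟩ := Submodule.mem_sup.mp hz
  rw [add_mul]
  exact Submodule.add_mem _ (hb.fus1h z1 h1 p hp) (hb.fuseh ze he p hp)

theorem phi_mul (h2 : (2 : F) ≠ 0) (hηh : η ≠ 1 / 2) {b : A} (hb : IsPCAxis F η b)
    (x y : A) : phi η b (x * y) = phi η b x * phi η b y := by
  obtain ⟨s, hs, p, hp, rfl⟩ := decompose' hb x
  obtain ⟨t, ht, q, hq, rfl⟩ := decompose' hb y
  have hexp : (s + p) * (t + q) = s * t + s * q + (t * p + p * q) := by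
    rw [mul_add, add_mul, add_mul, mul_comm p t]
    abel
  rw [hexp, phi_add, phi_add, phi_add]
  rw [phi_plus (plus_mul_plus hb hs ht),
    phi_eig_half h2 hηh (plus_mul_half hb hs hq),
    phi_eig_half h2 hηh (plus_mul_half hb ht hp),
    phi_plus (hb.fushh p hp q hq),
    phi_add, phi_plus hs, phi_eig_half h2 hηh hp,
    phi_add, phi_plus ht, phi_eig_half h2 hηh hq]
  rw [add_mul, mul_add, mul_add]
  simp only [mul_neg, neg_mul, neg_neg]
  rw [mul_comm p t]

theorem trans_eig (h2 : (2 : F) ≠ 0) (hηh : η ≠ 1 / 2) {b : A} (hb : IsPCAxis F η b)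
    {c z : A} {lam : F} (hz : z ∈ PCeig F c lam) :
    phi η b z ∈ PCeig F (phi η b c) lam := by
  rw [mem_PCeig, ← phi_mul h2 hηh hb, mem_PCeig.mp hz, phi_smul]

theorem trans_eig_rev (h2 : (2 : F) ≠ 0) (hηh : η ≠ 1 / 2) {b : A} (hb : IsPCAxis F η b)
    {c z : A} {lam : F} (hz : z ∈ PCeig F (phi η b c) lam) :
    phi η b z ∈ PCeig F c lam := by
  rw [mem_PCeig]
  have h := congrArg (phi η b) (mem_PCeig.mp hz)
  rw [phi_mul h2 hηh hb, phi_invol h2 hηh hb, phi_smul] at h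
  exact h

/-- The Miyamoto involution maps primitive axes to primitive axes. -/
theorem phi_axis (h2 : (2 : F) ≠ 0) (hηh : η ≠ 1 / 2) {b : A} (hb : IsPCAxis F η b)
    {c : A} (hc : IsPrimPCAxis F η c) : IsPrimPCAxis F η (phi η b c) := by
  have hmul := phi_mul h2 hηh hb
  have hinv := phi_invol h2 hηh hb
  refine ⟨⟨?_, ?_, ?_, ?_, ?_, ?_, ?_, ?_⟩, ?_, ?_⟩
  · rw [← hmul, hc.1.idem]
  · -- decomp
    rw [eq_top_iff]
    rintro x -
    have hx : phi η b x ∈ PCeig F c 1 ⊔ PCeig F c η ⊔ PCeig F c (1 / 2 : F) := by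
      rw [hc.1.decomp]; trivial
    obtain ⟨s, hs, w3, hw3, hxeq⟩ := Submodule.mem_sup.mp hx
    obtain ⟨w1, hw1, w2, hw2, hseq⟩ := Submodule.mem_sup.mp hs
    have hxx : x = phi η b w1 + phi η b w2 + phi η b w3 := by
      rw [← phi_add, ← phi_add, hseq, hxeq, hinv]
    rw [hxx]
    refine Submodule.add_mem _ (Submodule.add_mem _ ?_ ?_) ?_
    · exact Submodule.mem_sup_left (Submodule.mem_sup_left (trans_eig h2 hηh hb hw1))
    · exact Submodule.mem_sup_left (Submodule.mem_sup_right (trans_eig h2 hηh hb hw2))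
    · exact Submodule.mem_sup_right (trans_eig h2 hηh hb hw3)
  · -- fus11
    intro x hx y hy
    have h := hc.1.fus11 _ (trans_eig_rev h2 hηh hb hx) _ (trans_eig_rev h2 hηh hb hy)
    have h2' := trans_eig h2 hηh hb h
    rwa [← hmul, hinv] at h2'
  · -- fus1e
    intro x hx y hy
    have h := hc.1.fus1e _ (trans_eig_rev h2 hηh hb hx) _ (trans_eig_rev h2 hηh hb hy)
    have h2' := trans_eig h2 hηh hb h
    rwa [← hmul, hinv] at h2'
  · -- fus1h
    intro x hx y hy
    have h := hc.1.fus1h _ (trans_eig_rev h2 hηh hb hx) _ (trans_eig_rev h2 hηh hb hy)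
    have h2' := trans_eig h2 hηh hb h
    rwa [← hmul, hinv] at h2'
  · -- fusee
    intro x hx y hy
    have h := hc.1.fusee _ (trans_eig_rev h2 hηh hb hx) _ (trans_eig_rev h2 hηh hb hy)
    have h2' := trans_eig h2 hηh hb h
    rwa [← hmul, hinv] at h2'
  · -- fuseh
    intro x hx y hy
    have h := hc.1.fuseh _ (trans_eig_rev h2 hηh hb hx) _ (trans_eig_rev h2 hηh hb hy)
    have h2' := trans_eig h2 hηh hb h
    rwa [← hmul, hinv] at h2'
  · -- fushh
    intro x hx y hy
    have h := hc.1.fushh _ (trans_eig_rev h2 hηh hb hx) _ (trans_eig_rev h2 hηh hb hy)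
    obtain ⟨w1, hw1, w2, hw2, hweq⟩ := Submodule.mem_sup.mp h
    have hxy : x * y = phi η b w1 + phi η b w2 := by
      rw [← phi_add, hweq, ← hmul, hinv]
    rw [hxy]
    exact Submodule.add_mem _ (Submodule.mem_sup_left (trans_eig h2 hηh hb hw1))
      (Submodule.mem_sup_right (trans_eig h2 hηh hb hw2))
  · -- nonzero
    intro h
    apply hc.2.1
    have := congrArg (phi η b) h
    rwa [hinv, phi_zero] at this
  · -- primitivity
    apply le_antisymm
    · intro x hx
      have h := trans_eig_rev h2 hηh hb hx
      rw [hc.2.2] at h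
      obtain ⟨μ, hμ⟩ := Submodule.mem_span_singleton.mp h
      have : x = μ • phi η b c := by
        rw [← phi_smul, hμ, hinv]
      rw [this]
      exact Submodule.smul_mem _ _ (Submodule.mem_span_singleton_self _)
    · rw [Submodule.span_singleton_le_iff_mem]
      rw [mem_PCeig, ← hmul, hc.1.idem, one_smul]

end Miyamoto

section Span

variable {η : F}

/-- A primitive `PC(η)`-axial algebra is spanned by its primitive axes. -/
theorem axes_span_top (h2 : (2 : F) ≠ 0) (hη1 : η ≠ 1) (hηh : η ≠ 1 / 2)
    (hA : IsPrimPCAxialAlgebra F A η) :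
    Submodule.span F {x : A | IsPrimPCAxis F η x} = ⊤ := by
  obtain ⟨X, hXne, hXax, hXadj⟩ := hA
  set E := Submodule.span F {x : A | IsPrimPCAxis F η x} with hE
  have hgen : ∀ b, IsPrimPCAxis F η b → ∀ c, IsPrimPCAxis F η c → b * c ∈ E := by
    intro b hb c hc
    obtain ⟨γ, u, p, hu, hp, hceq⟩ := decompose hb c
    have hbE : b ∈ E := Submodule.subset_span hb
    have hcE : c ∈ E := Submodule.subset_span hc
    have hc' : IsPrimPCAxis F η (phi η b c) := phi_axis h2 hηh hb.1 hc
    have hφE : phi η b c ∈ E := Submodule.subset_span hc'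
    have hφc : phi η b c = γ • b + u - p := by
      rw [hceq, phi_add, phi_add, phi_smul, phi_eig_one (a_mem_one hb.1),
        phi_eig_eta hu, phi_eig_half h2 hηh hp, sub_eq_add_neg]
    have hpeq : (1 / 2 : F) • (c - phi η b c) = p := by
      have h' : c - phi η b c = (2 : F) • p := by
        rw [hφc, hceq]
        module
      rw [h', smul_smul, one_div, inv_mul_cancel₀ h2, one_smul]
    have hueq : (1 / 2 : F) • (c + phi η b c - (2 * γ) • b) = u := by
      have h' : c + phi η b c - (2 * γ) • b = (2 : F) • u := by
        rw [hφc, hceq]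
        module
      rw [h', smul_smul, one_div, inv_mul_cancel₀ h2, one_smul]
    have hpE : p ∈ E := by
      rw [← hpeq]
      exact Submodule.smul_mem _ _ (Submodule.sub_mem _ hcE hφE)
    have huE : u ∈ E := by
      rw [← hueq]
      exact Submodule.smul_mem _ _
        (Submodule.sub_mem _ (Submodule.add_mem _ hcE hφE) (Submodule.smul_mem _ _ hbE))
    have hbc : b * c = γ • b + η • u + (1 / 2 : F) • p := by
      conv_lhs => rw [hceq]
      simp only [mul_add, mul_smul_comm, hb.1.idem, mem_PCeig.mp hu, mem_PCeig.mp hp]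
    rw [hbc]
    exact Submodule.add_mem _ (Submodule.add_mem _ (Submodule.smul_mem _ _ hbE)
      (Submodule.smul_mem _ _ huE)) (Submodule.smul_mem _ _ hpE)
  have hmulE : ∀ x ∈ E, ∀ y ∈ E, x * y ∈ E := by
    intro x hx
    refine Submodule.span_induction (p := fun x _ => ∀ y ∈ E, x * y ∈ E) ?_ ?_ ?_ ?_ hx
    · intro b hbm y hy
      refine Submodule.span_induction (p := fun y _ => b * y ∈ E) ?_ ?_ ?_ ?_ hy
      · intro c hcm
        exact hgen b hbm c hcm
      · show b * (0 : A) ∈ E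
        rw [mul_zero]; exact zero_mem _
      · intro y1 y2 _ _ h1 h2'
        show b * (y1 + y2) ∈ E
        rw [mul_add]; exact add_mem h1 h2'
      · intro t y1 _ h1
        show b * (t • y1) ∈ E
        rw [mul_smul_comm]; exact Submodule.smul_mem _ _ h1
    · intro y _
      show (0 : A) * y ∈ E
      rw [zero_mul]; exact zero_mem _
    · intro x1 x2 _ _ h1 h2' y hy
      show (x1 + x2) * y ∈ E
      rw [add_mul]; exact add_mem (h1 y hy) (h2' y hy)
    · intro t x1 _ h1 y hy
      show (t • x1) * y ∈ E
      rw [smul_mul_assoc]; exact Submodule.smul_mem _ _ (h1 y hy)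
  rw [eq_top_iff]
  intro x _
  have hx : x ∈ NonUnitalAlgebra.adjoin F X := by rw [hXadj]; trivial
  refine NonUnitalAlgebra.adjoin_induction ?_ ?_ ?_ ?_ ?_ hx
  · intro z hz
    exact Submodule.subset_span (hXax z hz)
  · intro z w _ _ hz hw
    exact add_mem hz hw
  · exact zero_mem _
  · intro z w hz' hw' hz hw
    exact hmulE z hz w hw
  · intro t z _ hz
    exact Submodule.smul_mem _ _ hz

end Span

section RankOne

variable {η : F} (B : A →ₗ[F] A →ₗ[F] F)
  (hBfrob : ∀ x y z : A, B (x * y) z = B x (y * z))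

include hBfrob

theorem B_axis_const (h2 : (2 : F) ≠ 0) (hη1 : η ≠ 1) (hηh : η ≠ 1 / 2)
    (hηm1 : η + 1 ≠ 0) (hB1 : ∀ a : A, IsPrimPCAxis F η a → B a a = 1)
    (hA : IsPrimPCAxialAlgebra F A η)
    {d a : A} (hd : IsPrimPCAxis F η d) (ha : IsPrimPCAxis F η a) (y : A) :
    B d y = B a y := by
  have hy : y ∈ Submodule.span F {x : A | IsPrimPCAxis F η x} := by
    rw [axes_span_top h2 hη1 hηh hA]; trivial
  refine Submodule.span_induction (p := fun y _ => B d y = B a y) ?_ ?_ ?_ ?_ hy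
  · intro c hcm
    show B d c = B a c
    rw [pairwise B hBfrob h2 hη1 hηh hηm1 hB1 hd hcm,
      pairwise B hBfrob h2 hη1 hηh hηm1 hB1 ha hcm]
  · simp
  · intro y1 y2 _ _ e1 e2
    show B d (y1 + y2) = B a (y1 + y2)
    rw [map_add, map_add, e1, e2]
  · intro t y1 _ e1
    show B d (t • y1) = B a (t • y1)
    rw [map_smul, map_smul, e1]

theorem rank_one (h2 : (2 : F) ≠ 0) (hη1 : η ≠ 1) (hηh : η ≠ 1 / 2)
    (hηm1 : η + 1 ≠ 0) (hB1 : ∀ a : A, IsPrimPCAxis F η a → B a a = 1)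
    (hA : IsPrimPCAxialAlgebra F A η)
    {a : A} (ha : IsPrimPCAxis F η a) (x y : A) :
    B x y = B a x * B a y := by
  have hx : x ∈ Submodule.span F {x : A | IsPrimPCAxis F η x} := by
    rw [axes_span_top h2 hη1 hηh hA]; trivial
  refine Submodule.span_induction (p := fun x _ => B x y = B a x * B a y) ?_ ?_ ?_ ?_ hx
  · intro d hdm
    show B d y = B a d * B a y
    rw [B_axis_const B hBfrob h2 hη1 hηh hηm1 hB1 hA hdm ha y,
      pairwise B hBfrob h2 hη1 hηh hηm1 hB1 ha hdm, one_mul]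
  · simp
  · intro x1 x2 _ _ e1 e2
    show B (x1 + x2) y = B a (x1 + x2) * B a y
    simp only [map_add, LinearMap.add_apply] at *
    rw [e1, e2]
    ring
  · intro t x1 _ e1
    show B (t • x1) y = B a (t • x1) * B a y
    simp only [map_smul, LinearMap.smul_apply, smul_eq_mul] at *
    rw [e1]
    ring

end RankOne

end Stmt18Aux

open Stmt18Aux

set_option maxHeartbeats 1600000 in
/-- the product `(ax)(ay)` for a primitive axis `a`: the `η = -1` case
(characteristic `≠ 3`) in terms of the normalized Frobenius form, and the `η ≠ -1` case in
terms of the weight homomorphism `w = (a, ·)`. -/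
theorem stmt18 (η : F) (h2 : (2 : F) ≠ 0) (hη1 : η ≠ 1) (hηh : η ≠ 1 / 2)
    (hA : IsPrimPCAxialAlgebra F A η)
    (B : A →ₗ[F] A →ₗ[F] F) (hB0 : B ≠ 0)
    (hBsymm : ∀ x y : A, B x y = B y x)
    (hBfrob : ∀ x y z : A, B (x * y) z = B x (y * z))
    (hBnorm : ∀ a : A, IsPrimPCAxis F η a → B a a = 1)
    (a : A) (ha : IsPrimPCAxis F η a) :
    (η = -1 → (3 : F) ≠ 0 → ∀ x y : A,
      (a * x) * (a * y) = (1 / 4 : F) •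
        ((6 * B a (x * y) - 3 * B x y) • a + B a y • x + B a x • y -
          (2 * B a y) • (a * x) - (2 * B a x) • (a * y) - x * y +
          (2 : F) • (x * (a * y)) + (2 : F) • (y * (a * x)))) ∧
    (η ≠ -1 → ∀ x y : A,
      (a * x) * (a * y) = (1 / 4 : F) •
        (((1 - 2 * η) * B a (x * y)) • a - (η * B a y) • x - (η * B a x) • y +
          (2 * η * B a y) • (a * x) + (2 * η * B a x) • (a * y) - x * y +
          (2 : F) • (x * (a * y)) + (2 : F) • (y * (a * x)))) := by
  have hBaa : B a a = 1 := hBnorm a ha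
  have haa : a * a = a := ha.1.idem
  constructor
  · -- η = -1
    intro hη h3 x y
    subst hη
    obtain ⟨α, u, p, hu, hp, hxeq⟩ := decompose ha x
    obtain ⟨β, v, q, hv, hq, hyeq⟩ := decompose ha y
    have hau : a * u = (-1 : F) • u := mem_PCeig.mp hu
    have hav : a * v = (-1 : F) • v := mem_PCeig.mp hv
    have hap : a * p = (1 / 2 : F) • p := mem_PCeig.mp hp
    have haq : a * q = (1 / 2 : F) • q := mem_PCeig.mp hq
    have hua : u * a = (-1 : F) • u := by rw [mul_comm]; exact hau
    have hva : v * a = (-1 : F) • v := by rw [mul_comm]; exact hav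
    have hpa : p * a = (1 / 2 : F) • p := by rw [mul_comm]; exact hap
    have hqa : q * a = (1 / 2 : F) • q := by rw [mul_comm]; exact haq
    have huv : u * v = ((-1 : F) * B u v) • a := prod_ee B hBfrob hBnorm ha hu hv hη1
    obtain ⟨r, hr, hpq⟩ := prod_hh B hBfrob hBnorm hη1 ha hp hq
    have hvu : v * u = u * v := mul_comm v u
    have hqp : q * p = p * q := mul_comm q p
    have hqu : q * u = u * q := mul_comm q u
    have hvp : v * p = p * v := mul_comm v p
    -- orthogonality
    have hBau : B a u = 0 := B_a_eta B hBfrob hη1 ha.1 hu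
    have hBav : B a v = 0 := B_a_eta B hBfrob hη1 ha.1 hv
    have hBap : B a p = 0 := B_a_half B hBfrob h2 ha.1 hp
    have hBaq : B a q = 0 := B_a_half B hBfrob h2 ha.1 hq
    have hBua : B u a = 0 := B_apart B hBfrob hu (a_mem_one ha.1) hη1
    have hBpa : B p a = 0 :=
      B_apart B hBfrob hp (a_mem_one ha.1) (Ne.symm (one_ne_half h2))
    have hBuq : B u q = 0 := B_apart B hBfrob hu hq hηh
    have hBpv : B p v = 0 := B_apart B hBfrob hp hv (Ne.symm hηh)
    -- scalar values
    have hBax : B a x = α := by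
      rw [hxeq]
      simp only [map_add, map_smul, smul_eq_mul, hBaa, hBau, hBap]
      ring
    have hBay : B a y = β := by
      rw [hyeq]
      simp only [map_add, map_smul, smul_eq_mul, hBaa, hBav, hBaq]
      ring
    have hBxy : B x y = α * β + B u v + B p q := by
      rw [hxeq, hyeq]
      simp only [map_add, map_smul, LinearMap.add_apply, LinearMap.smul_apply,
        smul_eq_mul, hBaa, hBav, hBaq, hBua, hBuq, hBpa, hBpv]
      ring
    have hax : a * x = α • a + (-1 : F) • u + (1 / 2 : F) • p := by
      conv_lhs => rw [hxeq]
      simp only [mul_add, mul_smul_comm, haa, hau, hap]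
    have hBaxy : B a (x * y) = α * β + (-1 : F) * B u v + (1 / 2 : F) * B p q := by
      rw [← hBfrob a x y, hax, hyeq]
      simp only [map_add, map_smul, LinearMap.add_apply, LinearMap.smul_apply,
        smul_eq_mul, hBaa, hBav, hBaq, hBua, hBuq, hBpa, hBpv]
      ring
    rw [hBaxy, hBax, hBay, hBxy, hxeq, hyeq]
    simp only [mul_add, add_mul, smul_mul_assoc, mul_smul_comm, smul_smul, smul_add,
      haa, hau, hav, hap, haq, hua, hva, hpa, hqa, huv, hpq, hvu, hqp, hqu, hvp]
    have e4 : (4 : F) ≠ 0 := by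
      have h : (4 : F) = 2 ^ 2 := by norm_num
      rw [h]; exact pow_ne_zero _ h2
    have e8 : (8 : F) ≠ 0 := by
      have h : (8 : F) = 2 ^ 3 := by norm_num
      rw [h]; exact pow_ne_zero _ h2
    have e16 : (16 : F) ≠ 0 := by
      have h : (16 : F) = 2 ^ 4 := by norm_num
      rw [h]; exact pow_ne_zero _ h2
    have e32 : (32 : F) ≠ 0 := by
      have h : (32 : F) = 2 ^ 5 := by norm_num
      rw [h]; exact pow_ne_zero _ h2
    have e64 : (64 : F) ≠ 0 := by
      have h : (64 : F) = 2 ^ 6 := by norm_num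
      rw [h]; exact pow_ne_zero _ h2
    have e128 : (128 : F) ≠ 0 := by
      have h : (128 : F) = 2 ^ 7 := by norm_num
      rw [h]; exact pow_ne_zero _ h2
    have e256 : (256 : F) ≠ 0 := by
      have h : (256 : F) = 2 ^ 8 := by norm_num
      rw [h]; exact pow_ne_zero _ h2
    have e512 : (512 : F) ≠ 0 := by
      have h : (512 : F) = 2 ^ 9 := by norm_num
      rw [h]; exact pow_ne_zero _ h2
    have e1024 : (1024 : F) ≠ 0 := by
      have h : (1024 : F) = 2 ^ 10 := by norm_num
      rw [h]; exact pow_ne_zero _ h2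
    have e2048 : (2048 : F) ≠ 0 := by
      have h : (2048 : F) = 2 ^ 11 := by norm_num
      rw [h]; exact pow_ne_zero _ h2
    have e4096 : (4096 : F) ≠ 0 := by
      have h : (4096 : F) = 2 ^ 12 := by norm_num
      rw [h]; exact pow_ne_zero _ h2
    match_scalars
    any_goals (field_simp [h2, e4, e8, e16, e32, e64, e128, e256, e512, e1024, e2048, e4096]; try ring)
    all_goals
      first
        | rw [mul_assoc, inv_mul_cancel₀ e512, mul_one]
        | linear_combination (-256 * (β * α) + 768 * B u v) * (mul_inv_cancel₀ e512)
  · -- η ≠ -1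
    intro hηm x y
    have hηm1 : η + 1 ≠ 0 := fun h => hηm (by linear_combination h)
    obtain ⟨α, u, p, hu, hp, hxeq⟩ := decompose ha x
    obtain ⟨β, v, q, hv, hq, hyeq⟩ := decompose ha y
    have hau : a * u = η • u := mem_PCeig.mp hu
    have hav : a * v = η • v := mem_PCeig.mp hv
    have hap : a * p = (1 / 2 : F) • p := mem_PCeig.mp hp
    have haq : a * q = (1 / 2 : F) • q := mem_PCeig.mp hq
    have hua : u * a = η • u := by rw [mul_comm]; exact hau
    have hva : v * a = η • v := by rw [mul_comm]; exact hav
    have hpa : p * a = (1 / 2 : F) • p := by rw [mul_comm]; exact hap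
    have hqa : q * a = (1 / 2 : F) • q := by rw [mul_comm]; exact haq
    have hvu : v * u = u * v := mul_comm v u
    have hqp : q * p = p * q := mul_comm q p
    have hqu : q * u = u * q := mul_comm q u
    have hvp : v * p = p * v := mul_comm v p
    -- orthogonality
    have hBau : B a u = 0 := B_a_eta B hBfrob hη1 ha.1 hu
    have hBav : B a v = 0 := B_a_eta B hBfrob hη1 ha.1 hv
    have hBap : B a p = 0 := B_a_half B hBfrob h2 ha.1 hp
    have hBaq : B a q = 0 := B_a_half B hBfrob h2 ha.1 hq
    -- rank-one consequences
    have hBuv : B u v = 0 := by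
      rw [rank_one B hBfrob h2 hη1 hηh hηm1 hBnorm hA ha u v, hBau, zero_mul]
    have hBpq : B p q = 0 := by
      rw [rank_one B hBfrob h2 hη1 hηh hηm1 hBnorm hA ha p q, hBap, zero_mul]
    have huv : u * v = 0 := by
      rw [prod_ee B hBfrob hBnorm ha hu hv hη1, hBuv, mul_zero, zero_smul]
    obtain ⟨r, hr, hpq⟩ := prod_hh B hBfrob hBnorm hη1 ha hp hq
    rw [hBpq, mul_zero, zero_smul, zero_add] at hpq
    -- scalar values
    have hBax : B a x = α := by
      rw [hxeq]
      simp only [map_add, map_smul, smul_eq_mul, hBaa, hBau, hBap]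
      ring
    have hBay : B a y = β := by
      rw [hyeq]
      simp only [map_add, map_smul, smul_eq_mul, hBaa, hBav, hBaq]
      ring
    have hBaxy : B a (x * y) = α * β := by
      rw [← hBfrob a x y, rank_one B hBfrob h2 hη1 hηh hηm1 hBnorm hA ha (a * x) y,
        ← hBfrob a a x, haa, hBax, hBay]
    rw [hBaxy, hBax, hBay, hxeq, hyeq]
    simp only [mul_add, add_mul, smul_mul_assoc, mul_smul_comm, smul_smul, smul_add,
      haa, hau, hav, hap, haq, hua, hva, hpa, hqa, huv, hpq, hvu, hqp, hqu, hvp,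
      mul_zero, zero_mul, smul_zero, add_zero, zero_add]
    have e4 : (4 : F) ≠ 0 := by
      have h : (4 : F) = 2 ^ 2 := by norm_num
      rw [h]; exact pow_ne_zero _ h2
    have e8 : (8 : F) ≠ 0 := by
      have h : (8 : F) = 2 ^ 3 := by norm_num
      rw [h]; exact pow_ne_zero _ h2
    have e16 : (16 : F) ≠ 0 := by
      have h : (16 : F) = 2 ^ 4 := by norm_num
      rw [h]; exact pow_ne_zero _ h2
    have e32 : (32 : F) ≠ 0 := by
      have h : (32 : F) = 2 ^ 5 := by norm_num
      rw [h]; exact pow_ne_zero _ h2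
    have e64 : (64 : F) ≠ 0 := by
      have h : (64 : F) = 2 ^ 6 := by norm_num
      rw [h]; exact pow_ne_zero _ h2
    have e128 : (128 : F) ≠ 0 := by
      have h : (128 : F) = 2 ^ 7 := by norm_num
      rw [h]; exact pow_ne_zero _ h2
    have e256 : (256 : F) ≠ 0 := by
      have h : (256 : F) = 2 ^ 8 := by norm_num
      rw [h]; exact pow_ne_zero _ h2
    have e512 : (512 : F) ≠ 0 := by
      have h : (512 : F) = 2 ^ 9 := by norm_num
      rw [h]; exact pow_ne_zero _ h2
    have e1024 : (1024 : F) ≠ 0 := by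
      have h : (1024 : F) = 2 ^ 10 := by norm_num
      rw [h]; exact pow_ne_zero _ h2
    have e2048 : (2048 : F) ≠ 0 := by
      have h : (2048 : F) = 2 ^ 11 := by norm_num
      rw [h]; exact pow_ne_zero _ h2
    have e4096 : (4096 : F) ≠ 0 := by
      have h : (4096 : F) = 2 ^ 12 := by norm_num
      rw [h]; exact pow_ne_zero _ h2
    match_scalars
    any_goals (field_simp [h2, e4, e8, e16, e32, e64, e128, e256, e512, e1024, e2048, e4096]; try ring)
    all_goals
      first
        | rw [mul_assoc, inv_mul_cancel₀ e512, mul_one]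
        | linear_combination (-256 * (β * α) + 768 * B u v) * (mul_inv_cancel₀ e512)
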